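/- Let p be a prime, e = p − 1, and let a_0, a_1, a_2 be integers with 0 < a_1 − a_0, 0 < a_2 − a_1 and a_2 − a_0 < e; for 0 ≤ i, j ≤ 2 let [a_i − a_j] denote the unique integer in {0, …, e−1} congruent to −(a_i − a_j) modulo e. Let O = ℤ_p, S = O[[u]], and E(u) = u^e + p ∈ S. Let W be the 3×3 lower triangular unipotent matrix over S with W_{00} = W_{11} = W_{22} = 1, W_{10} = u^{[a_1−a_0]}·w_{10}, W_{21} = u^{[a_2−a_1]}·w_{21}, W_{20} = u^{[a_2−a_0]}·w_{20}, and zero entries above the diagonal, where w_{10}, w_{21} ∈ O and w_{20} ∈ O + E(u)·O. Then the adjugate adj(W) is again lower triangular unipotent of the same form: adj(W)_{10} = u^{[a_1−a_0]}·w'_{10}, adj(W)_{21} = u^{[a_2−a_1]}·w'_{21}, adj(W)_{20} = u^{[a_2−a_0]}·w'_{20} with w'_{10}, w'_{21} ∈ O and w'_{20} ∈ O + E(u)·O. -/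

import Mathlib

open PowerSeries

set_option maxHeartbeats 1000000 in
/-- The adjugate of a lower triangular unipotent `3×3` matrix with descent data over
`S = ℤ_p[[u]]` whose subdiagonal coefficients `w_{10}, w_{21}` are constants and whose
corner coefficient `w_{20}` lies in `ℤ_p + E(u)·ℤ_p` (`E(u) = u^e + p`, `e = p - 1`) is
again of the same shape. -/
theorem adjugate_unipotent_descent_data
    (p : ℕ) [hp : Fact p.Prime]
    (a : Fin 3 → ℤ)
    (ha01 : 0 < a 1 - a 0) (ha12 : 0 < a 2 - a 1) (ha02 : a 2 - a 0 < (p : ℤ) - 1)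
    (br : Fin 3 → Fin 3 → ℕ)
    (hbr : ∀ i j, br i j < p - 1 ∧ ((p : ℤ) - 1) ∣ ((br i j : ℤ) + (a i - a j)))
    (w10 w21 : ℤ_[p]) (w20 : PowerSeries ℤ_[p])
    (hw20 : ∃ c d : ℤ_[p],
      w20 = C (R := ℤ_[p]) c + (X ^ (p - 1) + C (R := ℤ_[p]) (p : ℤ_[p])) * C (R := ℤ_[p]) d)
    (W : Matrix (Fin 3) (Fin 3) (PowerSeries ℤ_[p]))
    (hW : W = !![1, 0, 0;
                 X ^ br 1 0 * C (R := ℤ_[p]) w10, 1, 0;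
                 X ^ br 2 0 * w20, X ^ br 2 1 * C (R := ℤ_[p]) w21, 1]) :
    ∃ (w10' w21' : ℤ_[p]) (w20' : PowerSeries ℤ_[p]),
      (∃ c d : ℤ_[p],
        w20' = C (R := ℤ_[p]) c + (X ^ (p - 1) + C (R := ℤ_[p]) (p : ℤ_[p])) * C (R := ℤ_[p]) d) ∧
      W.adjugate = !![1, 0, 0;
                 X ^ br 1 0 * C (R := ℤ_[p]) w10', 1, 0;
                 X ^ br 2 0 * w20', X ^ br 2 1 * C (R := ℤ_[p]) w21', 1] := by
  obtain ⟨c, d, hcd⟩ := hw20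
  have hkey : br 1 0 + br 2 1 = (p - 1) + br 2 0 := by
    obtain ⟨k1, hk1⟩ := (hbr 1 0).2
    obtain ⟨k2, hk2⟩ := (hbr 2 1).2
    obtain ⟨k3, hk3⟩ := (hbr 2 0).2
    have hb10 : (br 1 0 : ℤ) < (p : ℤ) - 1 := by
      have := (hbr 1 0).1; omega
    have hb21 : (br 2 1 : ℤ) < (p : ℤ) - 1 := by
      have := (hbr 2 1).1; omega
    have hb20 : (br 2 0 : ℤ) < (p : ℤ) - 1 := by
      have := (hbr 2 0).1; omega
    have hp2 : (2 : ℤ) ≤ (p : ℤ) - 1 := by linarith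
    have hk1' : k1 = 1 := by nlinarith [Int.natCast_nonneg (br 1 0)]
    have hk2' : k2 = 1 := by nlinarith [Int.natCast_nonneg (br 2 1)]
    have hk3' : k3 = 1 := by nlinarith [Int.natCast_nonneg (br 2 0)]
    subst hk1' hk2' hk3'
    have h : (br 1 0 : ℤ) + br 2 1 = ((p : ℤ) - 1) + br 2 0 := by linarith
    have hp1 : 1 ≤ p := hp.out.one_lt.le
    omega
  have hX : (X : PowerSeries ℤ_[p]) ^ br 1 0 * X ^ br 2 1
      = X ^ (p - 1) * X ^ br 2 0 := by
    rw [← pow_add, ← pow_add, hkey]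
  refine ⟨-w10, -w21,
    C (R := ℤ_[p]) (-(c + p * w10 * w21)) +
      (X ^ (p - 1) + C (R := ℤ_[p]) (p : ℤ_[p])) * C (R := ℤ_[p]) (w10 * w21 - d),
    ⟨-(c + p * w10 * w21), w10 * w21 - d, rfl⟩, ?_⟩
  subst hW hcd
  clear hbr hkey ha01 ha12 ha02 a
  rw [Matrix.adjugate_fin_three]
  congr 1
  funext i j
  fin_cases i <;> fin_cases j <;>
    simp <;>
    linear_combination (C (R := ℤ_[p]) w10 * C (R := ℤ_[p]) w21) * hX
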